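/- arXiv:1212.5106 — 6 statements merged into one kernel-verified Lean document; each statement's English description precedes it below -/
import Mathlib

section
/- Let u be a finite word over alphabet A = {1,2,3}, i ∈ A, and suppose u' satisfies i^δ · σ_i(u') = u · i^ε with δ, ε as above (δ = 1 iff u starts with i; ε = 1 iff u does not end with i). If |u| ≥ 2 then |u'| < |u|, and if |u| ∈ {0,1} then |u'| ∈ {0,1}. -/
/-- The Arnoux-Rauzy substitution `σ_i : i ↦ i, j ↦ j i` for `j ≠ i`,
extended to words. Letters 1,2,3 are represented by `0,1,2 : Fin 3`. -/
def sigmaSub {A : Type*} [DecidableEq A] (i : A) (w : List A) : List A :=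
  w.flatMap fun j => if j = i then [i] else [j, i]

lemma count_sigmaSub (i : Fin 3) (w : List (Fin 3)) :
    (sigmaSub i w).count i = w.length := by
  induction w with
  | nil => rfl
  | cons a t ih =>
    simp only [sigmaSub, List.flatMap_cons, List.count_append] at *
    by_cases ha : a = i <;> simp [ha, ih, List.count_cons] <;> omega

/-- If `i^δ · σ_i(u') = u · i^ε` (with `δ, ε` the boundary indicators), then
`|u'| < |u|` whenever `|u| ≥ 2`, and `|u'| ∈ {0,1}` whenever `|u| ∈ {0,1}`. -/
theorem length_of_desubstitution (i : Fin 3) (u u' : List (Fin 3)) (δ ε : ℕ)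
    (hδ : δ = if u.head? = some i then 1 else 0)
    (hε : ε = if u.getLast? = some i then 0 else 1)
    (h : List.replicate δ i ++ sigmaSub i u' = u ++ List.replicate ε i) :
    (2 ≤ u.length → u'.length < u.length) ∧ (u.length ≤ 1 → u'.length ≤ 1) := by
  have hcount : δ + u'.length = u.count i + ε := by
    have := congrArg (List.count i) h
    simpa [List.count_append, List.count_replicate, count_sigmaSub] using this
  constructor
  · intro h2
    obtain ⟨a, t, rfl⟩ : ∃ a t, u = a :: t := by
      cases u with
      | nil => simp at h2
      | cons a t => exact ⟨a, t, rfl⟩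
    obtain ⟨w, b, rfl⟩ : ∃ w b, t = w ++ [b] := by
      rcases t.eq_nil_or_concat with h0 | ⟨w, b, rfl⟩
      · subst h0; simp at h2
      · exact ⟨w, b, by simp⟩
    have hcw : w.count i ≤ w.length := List.count_le_length (a := i) (l := w)
    have hδ' : δ = if a = i then 1 else 0 := by simpa using hδ
    have hε' : ε = if b = i then 0 else 1 := by
      rw [hε]
      have : (a :: (w ++ [b])).getLast? = some b := by
        rw [show a :: (w ++ [b]) = (a :: w) ++ [b] by simp, List.getLast?_concat]
      simp [this]
    have hcu : (a :: (w ++ [b])).count i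
        = w.count i + ((if a = i then 1 else 0) + (if b = i then 1 else 0)) := by
      simp [List.count_cons, List.count_append]; omega
    rw [hcu] at hcount
    simp only [List.length_cons, List.length_append, List.length_singleton]
    by_cases ha : a = i <;> by_cases hb : b = i <;>
      simp [ha, hb] at hδ' hε' hcount ⊢ <;> omega
  · intro h1
    match u, h1 with
    | [], _ =>
      simp at hδ hε hcount
      omega
    | [a], _ =>
      simp [List.count_singleton] at hδ hε hcount
      by_cases ha : a = i <;> simp [ha] at hδ hε hcount <;> omega
end

section
/- Let u, v be finite words over a finite alphabet A, let j ∈ A, and let C ∈ ℕ. Suppose |u|_j − |v|_j > C + max(0, |u| − |v|). Then there exist a factor û of u and a factor v̂ of v with |û| = |v̂| = min(|u|, |v|) and |û|_j − |v̂|_j > C. -/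
/-- If `|u|_j − |v|_j > C + max(0, |u| − |v|)`, then there are factors `û` of `u`
and `v̂` of `v` with `|û| = |v̂| = min(|u|,|v|)` and `|û|_j − |v̂|_j > C`. -/
theorem exists_unbalanced_factors_of_max {A : Type*} [DecidableEq A]
    (u v : List A) (j : A) (C : ℕ)
    (h : (u.count j : ℤ) - v.count j > C + max 0 ((u.length : ℤ) - v.length)) :
    ∃ uh vh : List A, uh <:+: u ∧ vh <:+: v ∧
      uh.length = min u.length v.length ∧ vh.length = min u.length v.length ∧
      (uh.count j : ℤ) - vh.count j > C := by
  set m := min u.length v.length with hm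
  refine ⟨u.take m, v.take m, (u.take_prefix m).isInfix, (v.take_prefix m).isInfix, ?_, ?_, ?_⟩
  · rw [List.length_take]; omega
  · rw [List.length_take]; omega
  · have e1 : u.count j = (u.take m).count j + (u.drop m).count j := by
      rw [← List.count_append, List.take_append_drop]
    have e2 : v.count j = (v.take m).count j + (v.drop m).count j := by
      rw [← List.count_append, List.take_append_drop]
    have b1 : (u.drop m).count j ≤ u.length - m := by
      calc (u.drop m).count j ≤ (u.drop m).length := List.count_le_length
        _ = u.length - m := List.length_drop
    omega
end

section
/- Let i ∈ A be a letter, w ∈ A^* a word, and let u, v be factors of σ_i(w) with |u| ≥ |v|. Let j ∈ A with j ≠ i and C ∈ ℕ. If |u|_j − |v|_j > C + ⌈(|u| − |v|)/2⌉, then there exist a factor û of u and a factor v̂ of v with |û| = |v̂| and |û|_j − |v̂|_j > C. -/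
lemma sigmaSub_chain' {A : Type*} [DecidableEq A] (i : A) (w : List A) :
    (sigmaSub i w).Chain' (fun a b => a = i ∨ b = i) := by
  induction w with
  | nil => simp [sigmaSub, List.Chain']
  | cons a t ih =>
    simp only [sigmaSub, List.flatMap_cons] at *
    by_cases ha : a = i
    · simp only [ha, if_pos rfl]
      exact List.IsChain.cons ih (fun y _ => Or.inl rfl)
    · simp only [if_neg ha]
      exact List.IsChain.cons_cons (Or.inr rfl)
        (List.IsChain.cons ih (fun y _ => Or.inl rfl))

lemma count_le_half {A : Type*} [DecidableEq A] (i j : A) (hij : j ≠ i) :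
    ∀ l : List A, l.Chain' (fun a b => a = i ∨ b = i) →
      l.count j ≤ (l.length + 1) / 2
  | [], _ => by simp
  | [a], _ => by
    simp only [List.count_cons, List.count_nil]
    split <;> simp
  | a :: b :: t, h => by
    obtain ⟨hab, h2⟩ := List.isChain_cons_cons.mp h
    rcases hab with ha | hb
    · have ih := count_le_half i j hij (b :: t) h2
      have hja : a ≠ j := by rintro rfl; exact hij ha
      rw [List.count_cons_of_ne hja]
      simp only [List.length_cons] at *
      omega
    · have h3 : t.Chain' (fun a b => a = i ∨ b = i) := h2.tail
      have ih := count_le_half i j hij t h3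
      have hjb : j ≠ b := fun hh => hij (hh.trans hb)
      rw [show a :: b :: t = [a] ++ b :: t from rfl, List.count_append,
        List.count_cons_of_ne (Ne.symm hjb)]
      have : List.count j [a] ≤ 1 := by
        simp only [List.count_cons, List.count_nil]; split <;> simp
      simp only [List.length_append, List.length_cons, List.length_singleton] at *
      omega

/-- If `u, v` are factors of `σ_i(w)` with `|u| ≥ |v|`, `j ≠ i`, and
`|u|_j − |v|_j > C + ⌈(|u| − |v|)/2⌉`, then there are equal-length factors
`û` of `u` and `v̂` of `v` with `|û|_j − |v̂|_j > C`. -/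
theorem exists_unbalanced_factors_of_ceil {A : Type*} [DecidableEq A]
    (i j : A) (hij : j ≠ i) (w u v : List A) (C : ℕ)
    (hu : u <:+: sigmaSub i w) (hv : v <:+: sigmaSub i w)
    (hlen : v.length ≤ u.length)
    (h : (u.count j : ℤ) - v.count j > C + ⌈(((u.length : ℚ) - v.length) / 2)⌉) :
    ∃ uh vh : List A, uh <:+: u ∧ vh <:+: v ∧ uh.length = vh.length ∧
      (uh.count j : ℤ) - vh.count j > C := by
  set d := u.length - v.length with hd
  have hceil : ⌈(((u.length : ℚ) - v.length) / 2)⌉ = ((d + 1) / 2 : ℕ) := by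
    have heq : ((u.length : ℚ) - v.length) = (d : ℚ) := by
      rw [hd, Nat.cast_sub hlen]
    rw [heq, Int.ceil_eq_iff]
    have h2 : (((d + 1) / 2 : ℕ) : ℤ) = ((d : ℤ) + 1) / 2 := by omega
    have h3 : (d : ℤ) ≤ ((d : ℤ) + 1) / 2 * 2 := by omega
    have h4 : ((d : ℤ) + 1) / 2 * 2 ≤ (d : ℤ) + 1 := by omega
    rw [h2]
    have h3' : (d : ℚ) ≤ ((((d : ℤ) + 1) / 2 : ℤ) : ℚ) * 2 := by exact_mod_cast h3
    have h4' : ((((d : ℤ) + 1) / 2 : ℤ) : ℚ) * 2 ≤ (d : ℚ) + 1 := by exact_mod_cast h4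
    constructor <;> linarith
  refine ⟨u.drop d, v, (u.drop_suffix d).isInfix, List.infix_refl v, ?_, ?_⟩
  · simp only [List.length_drop]; omega
  · have htake : (u.take d).count j ≤ (d + 1) / 2 := by
      have hchain : (u.take d).Chain' (fun a b => a = i ∨ b = i) :=
        (sigmaSub_chain' i w).infix ((u.take_prefix d).isInfix.trans hu)
      refine (count_le_half i j hij (u.take d) hchain).trans ?_
      have hl : (u.take d).length ≤ d := by simp
      omega
    have hsplit : u.count j = (u.take d).count j + (u.drop d).count j := by
      conv_lhs => rw [← List.take_append_drop d u]
      rw [List.count_append]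
    rw [hceil] at h
    push_cast at h ⊢
    omega
end

section
/- Let ω be an Arnoux-Rauzy word over {1,2,3} whose directive sequence (i_m) starts with 2233 (i.e., i_0 i_1 i_2 i_3 = 2233). Then ω contains two factors u, v with |u|_1 − |v|_1 = 1, |u|_2 − |v|_2 = 2, and |u|_3 − |v|_3 = −2. -/
/-- `ARword dir n = σ_{i₀} σ_{i₁} ⋯ σ_{i_{n-1}} (1)` for the directive
sequence `dir`, where the letter `1` is represented by `0 : Fin 3`. -/
def ARword (dir : ℕ → Fin 3) (n : ℕ) : List (Fin 3) :=
  ((List.range n).map dir).foldr sigmaSub [0]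

/-- `u` is a factor of the infinite word `ω`. -/
def FactorOf {A : Type*} (ω : ℕ → A) (u : List A) : Prop :=
  ∃ k, u = (List.range u.length).map fun t => ω (k + t)

/-- `ω` is an Arnoux-Rauzy word with directive sequence `dir`: every letter
occurs infinitely often in `dir`, and the factors of `ω` are exactly the
factors of the words `σ_{i₀} ⋯ σ_{i_{n-1}}(1)`. -/
def IsAR (ω : ℕ → Fin 3) (dir : ℕ → Fin 3) : Prop :=
  (∀ a : Fin 3, ∀ m : ℕ, ∃ n, m ≤ n ∧ dir n = a) ∧
  (∀ u : List (Fin 3), FactorOf ω u ↔ ∃ n, u <:+: ARword dir n)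

/-- `ω` is `C`-balanced: any two factors of equal length have all letter-count
differences bounded by `C` in absolute value. -/
def IsBalanced {A : Type*} [DecidableEq A] (C : ℕ) (ω : ℕ → A) : Prop :=
  ∀ u v : List A, FactorOf ω u → FactorOf ω v → u.length = v.length →
    ∀ j : A, |(u.count j : ℤ) - v.count j| ≤ C

section Aux

lemma sigma_append (i : Fin 3) (a b : List (Fin 3)) :
    sigmaSub i (a ++ b) = sigmaSub i a ++ sigmaSub i b := by
  simp [sigmaSub]

lemma sigma_cons (i x : Fin 3) (t : List (Fin 3)) :
    sigmaSub i (x :: t) = (if x = i then [i] else [x, i]) ++ sigmaSub i t := by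
  simp [sigmaSub]

lemma sigma_ne_nil (i : Fin 3) {w : List (Fin 3)} (h : w ≠ []) : sigmaSub i w ≠ [] := by
  obtain ⟨x, t, rfl⟩ := List.exists_cons_of_ne_nil h
  rw [sigma_cons]
  split <;> simp

lemma sigma_mem (i : Fin 3) {j : Fin 3} {w : List (Fin 3)} (h : j ∈ w) :
    j ∈ sigmaSub i w := by
  simp only [sigmaSub, List.mem_flatMap]
  exact ⟨j, h, by split <;> simp_all⟩

lemma sigma_mem_self (i : Fin 3) {w : List (Fin 3)} (h : w ≠ []) :
    i ∈ sigmaSub i w := by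
  obtain ⟨x, t, rfl⟩ := List.exists_cons_of_ne_nil h
  rw [sigma_cons]
  split <;> simp

lemma sigma_head (i x : Fin 3) (t : List (Fin 3)) :
    ∃ t', sigmaSub i (x :: t) = x :: t' := by
  rw [sigma_cons]
  by_cases h : x = i
  · subst h; simp
  · simp [h]

lemma foldr_head (L : List (Fin 3)) (x : Fin 3) (t : List (Fin 3)) :
    ∃ t', L.foldr sigmaSub (x :: t) = x :: t' := by
  induction L with
  | nil => exact ⟨t, rfl⟩
  | cons i L ih =>
    obtain ⟨t', ht'⟩ := ih
    rw [List.foldr_cons, ht']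
    exact sigma_head i x t'

lemma foldr_decomp (L : List (Fin 3)) (x : Fin 3) {a b w : List (Fin 3)}
    (hw : w = a ++ x :: b) (ha : a ≠ []) :
    ∃ a' b', L.foldr sigmaSub w = a' ++ x :: b' ∧ a' ≠ [] := by
  induction L with
  | nil => exact ⟨a, b, hw, ha⟩
  | cons i L ih =>
    obtain ⟨a', b', h, ha'⟩ := ih
    obtain ⟨t', ht'⟩ := sigma_head i x b'
    refine ⟨sigmaSub i a', t', ?_, sigma_ne_nil i ha'⟩
    rw [List.foldr_cons, h, sigma_append, ht']

lemma ARword_split (d : ℕ → Fin 3) (a b : ℕ) :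
    ARword d (a + b) = ((List.range a).map d).foldr sigmaSub (ARword (fun i => d (a + i)) b) := by
  unfold ARword
  rw [List.range_add, List.map_append, List.foldr_append, List.map_map]
  rfl

lemma ARword_head (d : ℕ → Fin 3) (k : ℕ) : ∃ t, ARword d k = 0 :: t :=
  foldr_head _ 0 []

lemma ARword_ne_nil (d : ℕ → Fin 3) (k : ℕ) : ARword d k ≠ [] := by
  obtain ⟨t, ht⟩ := ARword_head d k; simp [ht]

lemma ARword_mem (d : ℕ → Fin 3) {j k : ℕ} (h : j < k) : d j ∈ ARword d k := by
  have hk : k = j + (1 + (k - j - 1)) := by omega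
  rw [hk, ARword_split]
  have : d j ∈ ARword (fun i => d (j + i)) (1 + (k - j - 1)) := by
    rw [ARword_split]
    simp only [List.range_succ, List.range_zero, List.nil_append, List.map_cons,
      List.map_nil, List.foldr]
    exact sigma_mem_self _ (ARword_ne_nil _ _)
  induction (List.range j).map d with
  | nil => exact this
  | cons i L ih => exact sigma_mem i ih

/-- The composite substitution `σ₁σ₁σ₂σ₂`. -/
def Tsub (w : List (Fin 3)) : List (Fin 3) :=
  sigmaSub 1 (sigmaSub 1 (sigmaSub 2 (sigmaSub 2 w)))

lemma Tsub_append (a b : List (Fin 3)) : Tsub (a ++ b) = Tsub a ++ Tsub b := by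
  simp [Tsub, sigma_append]

lemma Tsub_zero : Tsub [0] = [0, 1, 1, 2, 1, 1, 2, 1, 1] := by decide

lemma Tsub_one : Tsub [1] = [1, 2, 1, 1, 2, 1, 1] := by decide

lemma Tsub_two : Tsub [2] = [2, 1, 1] := by decide

lemma Tsub_end {w : List (Fin 3)} (h : w ≠ []) :
    ∃ p, Tsub w = p ++ [2, 1, 1] := by
  rcases (List.eq_nil_or_concat w) with rfl | ⟨q, x, rfl⟩
  · exact absurd rfl h
  · rw [List.concat_eq_append, Tsub_append]
    have hx : x = 0 ∨ x = 1 ∨ x = 2 := by fin_cases x <;> decide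
    rcases hx with rfl | rfl | rfl
    · exact ⟨Tsub q ++ [0, 1, 1, 2, 1, 1], by rw [Tsub_zero]; simp⟩
    · exact ⟨Tsub q ++ [1, 2, 1, 1], by rw [Tsub_one]; simp⟩
    · exact ⟨Tsub q, by rw [Tsub_two]⟩

lemma ARword_eq_Tsub (dir : ℕ → Fin 3)
    (hpre : (List.range 4).map dir = [1, 1, 2, 2]) (k : ℕ) :
    ARword dir (4 + k) = Tsub (ARword (fun i => dir (4 + i)) k) := by
  rw [ARword_split, hpre]
  rfl

lemma infix_u (dir : ℕ → Fin 3)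
    (hpre : (List.range 4).map dir = [1, 1, 2, 2]) (k : ℕ)
    {a b : List (Fin 3)} (h : ARword (fun i => dir (4 + i)) k = a ++ 0 :: b)
    (ha : a ≠ []) :
    [1, 1, 0, 1, 1] <:+: ARword dir (4 + k) := by
  obtain ⟨p, hp⟩ := Tsub_end ha
  refine ⟨p ++ [2], [2, 1, 1, 2, 1, 1] ++ Tsub b, ?_⟩
  rw [ARword_eq_Tsub dir hpre, h, show a ++ 0 :: b = a ++ [0] ++ b by simp,
    Tsub_append, Tsub_append, hp, Tsub_zero]
  simp

lemma infix_v (dir : ℕ → Fin 3)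
    (hpre : (List.range 4).map dir = [1, 1, 2, 2]) (k : ℕ)
    {a b : List (Fin 3)} (h : ARword (fun i => dir (4 + i)) k = a ++ 2 :: b)
    (ha : a ≠ []) :
    [2, 1, 1, 2] <:+: ARword dir (4 + k) := by
  obtain ⟨p, hp⟩ := Tsub_end ha
  refine ⟨p, [1, 1] ++ Tsub b, ?_⟩
  rw [ARword_eq_Tsub dir hpre, h, show a ++ 2 :: b = a ++ [2] ++ b by simp,
    Tsub_append, Tsub_append, hp, Tsub_two]
  simp

end Aux

/-- If the directive sequence of an Arnoux-Rauzy word `ω` starts with `2233`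
(i.e. `1,1,2,2` in our `Fin 3` encoding of the letters 1,2,3), then `ω` has two
factors `u, v` with Parikh-vector difference `(1, 2, −2)`. -/
theorem parikh_difference_of_prefix_2233
    (ω dir : ℕ → Fin 3) (hAR : IsAR ω dir)
    (hpre : (List.range 4).map dir = [1, 1, 2, 2]) :
    ∃ u v : List (Fin 3), FactorOf ω u ∧ FactorOf ω v ∧
      (u.count 0 : ℤ) - v.count 0 = 1 ∧
      (u.count 1 : ℤ) - v.count 1 = 2 ∧
      (u.count 2 : ℤ) - v.count 2 = -2 := by
  refine ⟨[1, 1, 0, 1, 1], [2, 1, 1, 2], ?_, ?_, by decide, by decide, by decide⟩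
  · -- u : need a non-initial 0 in some inner AR word
    obtain ⟨m0, hm04, hm0⟩ := hAR.1 0 4
    obtain ⟨m1, hm10, hm1⟩ := hAR.1 2 (m0 + 1)
    set e : ℕ → Fin 3 := fun i => dir (4 + i) with he
    obtain ⟨t, ht⟩ := ARword_head (fun i => e ((m0 - 4) + (1 + i))) ((m1 - m0 - 1) + 1)
    have h2mem : (2 : Fin 3) ∈ ARword (fun i => e ((m0 - 4) + (1 + i))) ((m1 - m0 - 1) + 1) := by
      have hval : (fun i => e ((m0 - 4) + (1 + i))) (m1 - m0 - 1) = 2 := by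
        show dir (4 + ((m0 - 4) + (1 + (m1 - m0 - 1)))) = 2
        rw [show 4 + ((m0 - 4) + (1 + (m1 - m0 - 1))) = m1 from by omega]
        exact hm1
      have := ARword_mem (fun i => e ((m0 - 4) + (1 + i))) (Nat.lt_succ_self (m1 - m0 - 1))
      rwa [show e (m0 - 4 + (1 + (m1 - m0 - 1))) = 2 from hval] at this
    have htne : t ≠ [] := by
      rintro rfl
      rw [ht] at h2mem
      exact absurd h2mem (by decide)
    obtain ⟨s1, t1, hst⟩ := List.append_of_mem (sigma_mem_self 0 htne)
    have hdec : sigmaSub (e (m0 - 4)) (ARword (fun i => e ((m0 - 4) + (1 + i))) ((m1 - m0 - 1) + 1))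
        = (0 :: s1) ++ 0 :: t1 := by
      have hej0 : e (m0 - 4) = 0 := by
        show dir (4 + (m0 - 4)) = 0
        rw [show 4 + (m0 - 4) = m0 from by omega]
        exact hm0
      rw [hej0, ht, show (0 : Fin 3) :: t = [0] ++ t from rfl, sigma_append, hst]
      rfl
    have hsplit2 : ARword (fun i => e ((m0 - 4) + i)) (1 + ((m1 - m0 - 1) + 1))
        = sigmaSub (e (m0 - 4)) (ARword (fun i => e ((m0 - 4) + (1 + i))) ((m1 - m0 - 1) + 1)) := by
      rw [ARword_split]
      simp only [List.range_succ, List.range_zero, List.nil_append, List.map_cons,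
        List.map_nil, List.foldr]
      rfl
    have hsplit : ARword e ((m0 - 4) + (1 + ((m1 - m0 - 1) + 1)))
        = ((List.range (m0 - 4)).map e).foldr sigmaSub
          (ARword (fun i => e ((m0 - 4) + i)) (1 + ((m1 - m0 - 1) + 1))) :=
      ARword_split e _ _
    obtain ⟨a', b', hab, ha'⟩ := foldr_decomp ((List.range (m0 - 4)).map e) 0
      (hsplit2.trans hdec) (by simp : (0 : Fin 3) :: s1 ≠ [])
    exact (hAR.2 _).mpr ⟨4 + ((m0 - 4) + (1 + ((m1 - m0 - 1) + 1))),
      infix_u dir hpre _ (hsplit.trans hab) ha'⟩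
  · -- v : need a non-initial 2 in some inner AR word
    obtain ⟨m, hm4, hm⟩ := hAR.1 2 4
    set e : ℕ → Fin 3 := fun i => dir (4 + i) with he
    set k := (m - 4) + 1 with hk
    have h2mem : (2 : Fin 3) ∈ ARword e k := by
      have := ARword_mem e (Nat.lt_succ_self (m - 4))
      have hval : e (m - 4) = 2 := by
        show dir (4 + (m - 4)) = 2
        rw [show 4 + (m - 4) = m from by omega]
        exact hm
      rwa [hval] at this
    obtain ⟨t, ht⟩ := ARword_head e k
    have h2t : (2 : Fin 3) ∈ t := by
      rw [ht] at h2mem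
      rcases List.mem_cons.mp h2mem with h | h
      · exact absurd h (by decide)
      · exact h
    obtain ⟨s1, t1, hst⟩ := List.append_of_mem h2t
    have hab : ARword e k = (0 :: s1) ++ 2 :: t1 := by rw [ht, hst]; rfl
    exact (hAR.2 _).mpr ⟨4 + k, infix_v dir hpre k hab (by simp)⟩
end

section
/- For every letter i ∈ A and every word u over A, the word i · σ_i(u) can be written as a sequence of blocks each equal to i or of the form i j with j ≠ i; consequently, if w is a factor of σ_i(u), then the number of occurrences of i in w satisfies |w|_i ≥ ⌊|w|/2⌋. -/
private lemma chain_count {A : Type*} [DecidableEq A] (i : A) :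
    ∀ w : List A, List.Chain' (fun a b => a = i ∨ b = i) w →
      w.length / 2 ≤ w.count i
  | [], _ => by simp
  | [a], _ => by simp
  | a :: b :: rest, h => by
    have h1 : a = i ∨ b = i := (List.isChain_cons_cons.mp h).1
    have h2 : List.Chain' (fun a b => a = i ∨ b = i) rest :=
      ((List.isChain_cons_cons.mp h).2).tail
    have hcount : 1 + rest.count i ≤ (a :: b :: rest).count i := by
      rcases h1 with h1 | h1 <;> subst h1 <;> simp [List.count_cons] <;> omega
    have := chain_count i rest h2
    simp only [List.length_cons]
    omega

private lemma chain_sigma {A : Type*} [DecidableEq A] (i : A) (u : List A) :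
    List.Chain' (fun a b => a = i ∨ b = i) (sigmaSub i u) := by
  induction u with
  | nil => simp [sigmaSub]; exact List.isChain_nil
  | cons a u ih =>
    have : sigmaSub i (a :: u) =
        (if a = i then [i] else [a, i]) ++ sigmaSub i u := by
      simp [sigmaSub]
    rw [this]
    apply List.IsChain.append
    · split <;> simp
    · exact ih
    · intro x hx y _
      left
      split at hx <;> simp_all

/-- The word `i · σ_i(u)` is a concatenation of blocks each equal to `[i]` or
of the form `[i, j]` with `j ≠ i`; consequently every factor `w` of `σ_i(u)`
satisfies `|w|_i ≥ ⌊|w|/2⌋`. -/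
theorem block_decomposition_and_count {A : Type*} [DecidableEq A]
    (i : A) (u : List A) :
    (∃ L : List (List A), (∀ b ∈ L, b = [i] ∨ ∃ j, j ≠ i ∧ b = [i, j]) ∧
      L.flatten = i :: sigmaSub i u) ∧
    (∀ w : List A, w <:+: sigmaSub i u → w.length / 2 ≤ w.count i) := by
  constructor
  · induction u with
    | nil => exact ⟨[[i]], by simp [sigmaSub]⟩
    | cons a u ih =>
      obtain ⟨L, hL, hflat⟩ := ih
      by_cases ha : a = i
      · refine ⟨[i] :: L, ?_, ?_⟩
        · intro b hb
          rcases List.mem_cons.mp hb with hb | hb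
          · left; exact hb
          · exact hL b hb
        · simp [hflat, sigmaSub, ha]
      · refine ⟨[i, a] :: L, ?_, ?_⟩
        · intro b hb
          rcases List.mem_cons.mp hb with hb | hb
          · right; exact ⟨a, ha, hb⟩
          · exact hL b hb
        · simp [hflat, sigmaSub, ha]
  · intro w hw
    exact chain_count i w ((chain_sigma i u).infix hw)
end

section
/- Let u, v be factors of σ_2(σ_2(σ_3(σ_3(w)))) for some word w over {1,2,3}, arising as in the desubstitution chain: if x, y are words with Parikh-vector difference (1,0,0) (e.g., x = 1, y = empty word), then applying σ_3 twice and σ_2 twice with appropriate boundary adjustments yields factors u, v of σ_2 σ_2 σ_3 σ_3 (images, with letters 3 and 2 optionally removed/prepended at the boundary) whose Parikh-vector difference is (1, 2, −2). -/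
namespace AuxPC

variable {A : Type*} [DecidableEq A]

lemma sigma_cons (i a : A) (w : List A) :
    sigmaSub i (a :: w) = (if a = i then [i] else [a, i]) ++ sigmaSub i w := by
  simp [sigmaSub]

lemma sigma_append (i : A) (u v : List A) :
    sigmaSub i (u ++ v) = sigmaSub i u ++ sigmaSub i v := by
  simp [sigmaSub]

lemma count_sigma_self (i : A) (w : List A) :
    (sigmaSub i w).count i = w.length := by
  induction w with
  | nil => rfl
  | cons a w ih =>
    rw [sigma_cons]
    by_cases h : a = i <;> simp [h, List.count_cons, ih]

lemma count_sigma_ne (i j : A) (h : j ≠ i) (w : List A) :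
    (sigmaSub i w).count j = w.count j := by
  induction w with
  | nil => rfl
  | cons a w ih =>
    rw [sigma_cons]
    by_cases ha : a = i
    · simp [ha, List.count_cons, ih, h]
    · simp [ha, List.count_cons, ih, Ne.symm h]

lemma count_cons_sigma_self (i : A) (w : List A) :
    ((i :: sigmaSub i w).count i) = w.length + 1 := by
  rw [List.count_cons, count_sigma_self]
  simp

lemma count_cons_sigma_ne (i j : A) (h : j ≠ i) (w : List A) :
    ((i :: sigmaSub i w).count j) = w.count j := by
  rw [List.count_cons, count_sigma_ne i j h]
  simp [Ne.symm h]


lemma sigma_eq_concat (i : A) (w : List A) (hw : w ≠ []) :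
    ∃ q, sigmaSub i w = q ++ [i] := by
  induction w with
  | nil => exact absurd rfl hw
  | cons a w ih =>
    rcases eq_or_ne w [] with rfl | hw'
    · by_cases h : a = i
      · exact ⟨[], by simp [sigmaSub, h]⟩
      · exact ⟨[a], by simp [sigmaSub, h]⟩
    · obtain ⟨q, hq⟩ := ih hw'
      exact ⟨(if a = i then [i] else [a, i]) ++ q, by rw [sigma_cons, hq, List.append_assoc]⟩

/-- `σ_i(w)` with its final letter (an `i`) removed. -/
def trunc (i : A) (w : List A) : List A := (sigmaSub i w).dropLast

lemma trunc_eq (i : A) (w : List A) (hw : w ≠ []) :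
    ∃ q, sigmaSub i w = q ++ [i] ∧ trunc i w = q := by
  obtain ⟨q, hq⟩ := sigma_eq_concat i w hw
  exact ⟨q, hq, by simp [trunc, hq]⟩

lemma count_trunc_self (i : A) (w : List A) (hw : w ≠ []) :
    (trunc i w).count i = w.length - 1 := by
  obtain ⟨q, hq, ht⟩ := trunc_eq i w hw
  have h := count_sigma_self i w
  rw [hq] at h
  simp [List.count_append] at h
  rw [ht]
  omega

lemma count_trunc_ne (i j : A) (h : j ≠ i) (w : List A) (hw : w ≠ []) :
    (trunc i w).count j = w.count j := by
  obtain ⟨q, hq, ht⟩ := trunc_eq i w hw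
  have h2 := count_sigma_ne i j h w
  rw [hq] at h2
  simp [List.count_append, h, List.count_cons, Ne.symm h] at h2
  rw [ht, ← h2]

lemma trunc_infix (i : A) (w : List A) : trunc i w <:+: i :: sigmaSub i w :=
  (List.dropLast_prefix _).isInfix.trans (List.suffix_cons _ _).isInfix

lemma sigma_infix_cons (i : A) {u w : List A} (h : u <:+: w) :
    i :: sigmaSub i u <:+: i :: sigmaSub i w := by
  obtain ⟨p, s, rfl⟩ := h
  rcases eq_or_ne p [] with rfl | hp
  · exact ⟨[], sigmaSub i s, by simp [sigma_append]⟩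
  · obtain ⟨q, hq⟩ := sigma_eq_concat i p hp
    refine ⟨i :: q, sigmaSub i s, ?_⟩
    simp [sigma_append, hq]

lemma length_eq_counts (l : List (Fin 3)) :
    l.length = l.count 0 + l.count 1 + l.count 2 := by
  induction l with
  | nil => rfl
  | cons a l ih => fin_cases a <;> simp [List.count_cons, ih] <;> omega

lemma ne_nil_of_count (j : Fin 3) (l : List (Fin 3)) (h : 1 ≤ l.count j) : l ≠ [] := by
  intro hl; simp [hl] at h

end AuxPC

open AuxPC in
/-- Desubstitution chain: if `x, y` have Parikh-vector difference `(1,0,0)`,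
then applying `σ₃` twice and then `σ₂` twice (with the boundary adjustments,
i.e. passing to factors of `i · σ_i(·)` at each step) yields factors `u, v`
of the respective images with Parikh-vector difference `(1, 2, −2)`.
Letters 1,2,3 are `0,1,2 : Fin 3`, so `σ₂ = sigmaSub 1` and `σ₃ = sigmaSub 2`. -/
theorem parikh_chain_2233 (x y : List (Fin 3))
    (h1 : (x.count 0 : ℤ) - y.count 0 = 1)
    (h2 : (x.count 1 : ℤ) - y.count 1 = 0)
    (h3 : (x.count 2 : ℤ) - y.count 2 = 0) :
    ∃ u v : List (Fin 3),
      u <:+: 1 :: sigmaSub 1 (1 :: sigmaSub 1 (2 :: sigmaSub 2 (2 :: sigmaSub 2 x))) ∧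
      v <:+: 1 :: sigmaSub 1 (1 :: sigmaSub 1 (2 :: sigmaSub 2 (2 :: sigmaSub 2 y))) ∧
      (u.count 0 : ℤ) - v.count 0 = 1 ∧
      (u.count 1 : ℤ) - v.count 1 = 2 ∧
      (u.count 2 : ℤ) - v.count 2 = -2 := by
  have hx0 : 1 ≤ x.count 0 := by omega
  have hx : x ≠ [] := ne_nil_of_count 0 x hx0
  -- u side: drop the trailing 2 at each σ₂-step, keep full words at σ₁-steps
  set u1 := trunc 2 x with hu1
  have hu1c0 : u1.count 0 = x.count 0 := count_trunc_ne 2 0 (by decide) x hx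
  have hu1c1 : u1.count 1 = x.count 1 := count_trunc_ne 2 1 (by decide) x hx
  have hu1c2 : u1.count 2 = x.length - 1 := count_trunc_self 2 x hx
  have hu1ne : u1 ≠ [] := ne_nil_of_count 0 u1 (by omega)
  set u2 := trunc 2 u1 with hu2
  have hu2c0 : u2.count 0 = u1.count 0 := count_trunc_ne 2 0 (by decide) u1 hu1ne
  have hu2c1 : u2.count 1 = u1.count 1 := count_trunc_ne 2 1 (by decide) u1 hu1ne
  have hu2c2 : u2.count 2 = u1.length - 1 := count_trunc_self 2 u1 hu1ne
  set u3 := (1 : Fin 3) :: sigmaSub 1 u2 with hu3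
  have hu3c0 : u3.count 0 = u2.count 0 := count_cons_sigma_ne 1 0 (by decide) u2
  have hu3c1 : u3.count 1 = u2.length + 1 := count_cons_sigma_self 1 u2
  have hu3c2 : u3.count 2 = u2.count 2 := count_cons_sigma_ne 1 2 (by decide) u2
  set u4 := (1 : Fin 3) :: sigmaSub 1 u3 with hu4
  have hu4c0 : u4.count 0 = u3.count 0 := count_cons_sigma_ne 1 0 (by decide) u3
  have hu4c1 : u4.count 1 = u3.length + 1 := count_cons_sigma_self 1 u3
  have hu4c2 : u4.count 2 = u3.count 2 := count_cons_sigma_ne 1 2 (by decide) u3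
  -- v side: keep full words at σ₂-steps, drop the trailing 1 at each σ₁-step
  set v1 := (2 : Fin 3) :: sigmaSub 2 y with hv1
  have hv1c0 : v1.count 0 = y.count 0 := count_cons_sigma_ne 2 0 (by decide) y
  have hv1c1 : v1.count 1 = y.count 1 := count_cons_sigma_ne 2 1 (by decide) y
  have hv1c2 : v1.count 2 = y.length + 1 := count_cons_sigma_self 2 y
  set v2 := (2 : Fin 3) :: sigmaSub 2 v1 with hv2
  have hv2c0 : v2.count 0 = v1.count 0 := count_cons_sigma_ne 2 0 (by decide) v1
  have hv2c1 : v2.count 1 = v1.count 1 := count_cons_sigma_ne 2 1 (by decide) v1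
  have hv2c2 : v2.count 2 = v1.length + 1 := count_cons_sigma_self 2 v1
  have hv2ne : v2 ≠ [] := by simp [hv2]
  set v3 := trunc 1 v2 with hv3
  have hv3c0 : v3.count 0 = v2.count 0 := count_trunc_ne 1 0 (by decide) v2 hv2ne
  have hv3c1 : v3.count 1 = v2.length - 1 := count_trunc_self 1 v2 hv2ne
  have hv3c2 : v3.count 2 = v2.count 2 := count_trunc_ne 1 2 (by decide) v2 hv2ne
  have hv2c2' : 1 ≤ v2.count 2 := by
    rw [hv2, List.count_cons]; simp
  have hv3ne : v3 ≠ [] := ne_nil_of_count 2 v3 (by omega)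
  set v4 := trunc 1 v3 with hv4
  have hv4c0 : v4.count 0 = v3.count 0 := count_trunc_ne 1 0 (by decide) v3 hv3ne
  have hv4c1 : v4.count 1 = v3.length - 1 := count_trunc_self 1 v3 hv3ne
  have hv4c2 : v4.count 2 = v3.count 2 := count_trunc_ne 1 2 (by decide) v3 hv3ne
  refine ⟨u4, v4, ?_, ?_, ?_, ?_, ?_⟩
  · -- u4 is a factor of the full image on the x side
    have i1 : u1 <:+: (2 : Fin 3) :: sigmaSub 2 x := trunc_infix 2 x
    have i2 : u2 <:+: (2 : Fin 3) :: sigmaSub 2 ((2 : Fin 3) :: sigmaSub 2 x) :=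
      (trunc_infix 2 u1).trans (sigma_infix_cons 2 i1)
    exact sigma_infix_cons 1 (sigma_infix_cons 1 i2)
  · -- v4 is a factor of the full image on the y side
    exact (trunc_infix 1 v3).trans (sigma_infix_cons 1 (trunc_infix 1 v2))
  all_goals
    have L1 := length_eq_counts u1
    have L2 := length_eq_counts u2
    have L3 := length_eq_counts u3
    have Lx := length_eq_counts x
    have Lv1 := length_eq_counts v1
    have Lv2 := length_eq_counts v2
    have Lv3 := length_eq_counts v3
    have Ly := length_eq_counts y
    omega
end
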